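/- arXiv:2310.07320 — 2 statements merged into one kernel-verified Lean document; each statement's English description precedes it below -/
import Mathlib

section
/- Let S be a finite multiset of real numbers with |S| = n > 2f for an integer f ≥ 0, and suppose S contains at most f 'Byzantine' values; all other values are 'normal'. Let B be the multiset obtained by removing the f largest and f smallest elements of S. Then every element b ∈ B satisfies min(normal values) ≤ b ≤ max(normal values), and in particular the average of B lies between the minimum and the maximum of the normal values. -/
open Multiset in
lemma exists_normal_of_count (normal byz : Multiset ℝ) (f : ℕ) (hbyz : Multiset.card byz ≤ f)
    (p : ℝ → Prop) [DecidablePred p]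
    (h : f + 1 ≤ Multiset.card ((normal + byz).filter p)) : ∃ x ∈ normal, p x := by
  rw [Multiset.filter_add, Multiset.card_add] at h
  have h2 : Multiset.card (byz.filter p) ≤ f :=
    le_trans (Multiset.card_le_card (Multiset.filter_le p byz)) hbyz
  have h3 : 0 < Multiset.card (normal.filter p) := by omega
  obtain ⟨x, hx⟩ := Multiset.card_pos_iff_exists_mem.mp h3
  exact ⟨x, (Multiset.mem_filter.mp hx).1, (Multiset.mem_filter.mp hx).2⟩

lemma count_le_ge (L : List ℝ) (hs : L.Pairwise (· ≤ ·)) (j : ℕ) (hj : j < L.length) :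
    j + 1 ≤ Multiset.card ((↑L : Multiset ℝ).filter (· ≤ L[j])) ∧
    L.length - j ≤ Multiset.card ((↑L : Multiset ℝ).filter (L[j] ≤ ·)) := by
  constructor
  · have hsub : ((L.take (j+1) : List ℝ) : Multiset ℝ) ≤ ↑L := by
      exact_mod_cast (List.take_sublist (j+1) L).subperm
    have hall : ∀ x ∈ L.take (j+1), x ≤ L[j] := by
      intro x hx
      obtain ⟨i, hi, rfl⟩ := List.getElem_of_mem hx
      rw [List.getElem_take]
      have hi' : i < j + 1 := lt_of_lt_of_le hi (by simp [List.length_take])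
      rcases lt_or_eq_of_le (Nat.lt_succ_iff.mp hi') with h | h
      · exact (List.pairwise_iff_getElem.mp hs) i j _ _ h
      · subst h; rfl
    have heq : ((L.take (j+1) : List ℝ) : Multiset ℝ).filter (· ≤ L[j]) = ↑(L.take (j+1)) :=
      Multiset.filter_eq_self.mpr (by simpa using hall)
    have := Multiset.card_le_card (Multiset.filter_le_filter (· ≤ L[j]) hsub)
    rw [heq] at this
    simpa [List.length_take, Nat.succ_le_of_lt hj] using this
  · have hsub : ((L.drop j : List ℝ) : Multiset ℝ) ≤ ↑L := by
      exact_mod_cast (List.drop_sublist j L).subperm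
    have hall : ∀ x ∈ L.drop j, L[j] ≤ x := by
      intro x hx
      obtain ⟨i, hi, rfl⟩ := List.getElem_of_mem hx
      rw [List.getElem_drop]
      rcases Nat.eq_zero_or_pos i with h | h
      · subst h; simp
      · exact (List.pairwise_iff_getElem.mp hs) j (j + i) hj (by simp [List.length_drop] at hi; omega) (by omega)
    have heq : ((L.drop j : List ℝ) : Multiset ℝ).filter (L[j] ≤ ·) = ↑(L.drop j) :=
      Multiset.filter_eq_self.mpr (by simpa using hall)
    have := Multiset.card_le_card (Multiset.filter_le_filter (L[j] ≤ ·) hsub)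
    rw [heq] at this
    simpa [List.length_drop] using this

theorem trimmed_mean_bracketed (S normal byz : Multiset ℝ) (n f : ℕ)
    (hpart : S = normal + byz)
    (hbyz : Multiset.card byz ≤ f)
    (hcard : Multiset.card S = n)
    (hn : 2 * f < n)
    (B : List ℝ)
    (hB : B = ((S.sort (· ≤ ·)).drop f).take (n - 2 * f)) :
    (∀ b ∈ B, (∃ x ∈ normal, x ≤ b) ∧ (∃ y ∈ normal, b ≤ y)) ∧
    ((∃ x ∈ normal, x ≤ B.sum / B.length) ∧ (∃ y ∈ normal, B.sum / B.length ≤ y)) := by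
  set L := S.sort (· ≤ ·) with hL
  have hsorted : L.Pairwise (· ≤ ·) := by rw [hL]; simp
  have hcoe : (↑L : Multiset ℝ) = S := S.sort_eq _
  have hlen : L.length = n := by rw [← hcard, ← hcoe]; simp
  have hBlen : B.length = n - 2 * f := by
    rw [hB]; simp [List.length_take, List.length_drop, hlen]; omega
  -- index characterization of membership
  have hmem : ∀ b ∈ B, ∃ j : ℕ, f ≤ j ∧ j < n - f ∧ ∃ hj : j < L.length, L[j] = b := by
    intro b hb
    rw [hB] at hb
    obtain ⟨i, hi, rfl⟩ := List.getElem_of_mem hb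
    have hi' : i < n - 2 * f := by
      have := hi
      simp [List.length_take, List.length_drop, hlen] at this; omega
    refine ⟨f + i, Nat.le_add_right _ _, by omega, by rw [hlen]; omega, ?_⟩
    rw [List.getElem_take, List.getElem_drop]
  -- per-element brackets
  have key : ∀ b ∈ B, (∃ x ∈ normal, x ≤ b) ∧ (∃ y ∈ normal, b ≤ y) := by
    intro b hb
    obtain ⟨j, hjf, hjn, hj, rfl⟩ := hmem b hb
    obtain ⟨h1, h2⟩ := count_le_ge L hsorted j hj
    rw [hcoe, hpart] at h1 h2
    constructor
    · exact exists_normal_of_count normal byz f hbyz _ (le_trans (by omega) h1)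
    · exact exists_normal_of_count normal byz f hbyz _ (le_trans (by rw [hlen]; omega) h2)
  refine ⟨key, ?_⟩
  -- B is nonempty and sorted
  have hBne : B ≠ [] := by
    intro h
    rw [h] at hBlen; simp at hBlen; omega
  have hBsorted : B.Pairwise (· ≤ ·) := by
    rw [hB]
    exact hsorted.sublist ((List.take_sublist _ _).trans (List.drop_sublist _ _))
  have h0 : 0 < B.length := List.length_pos_iff.mpr hBne
  have hb0 : B[0] ∈ B := List.getElem_mem h0
  have hblast : B[B.length - 1] ∈ B := List.getElem_mem (by omega)
  obtain ⟨⟨x, hxn, hx⟩, -⟩ := key _ hb0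
  obtain ⟨-, ⟨y, hyn, hy⟩⟩ := key _ hblast
  have hfirst : ∀ b ∈ B, B[0] ≤ b := by
    intro b hb
    obtain ⟨i, hi, rfl⟩ := List.getElem_of_mem hb
    rcases Nat.eq_zero_or_pos i with h | h
    · subst h; rfl
    · exact (List.pairwise_iff_getElem.mp hBsorted) 0 i h0 hi h
  have hlast : ∀ b ∈ B, b ≤ B[B.length - 1] := by
    intro b hb
    obtain ⟨i, hi, rfl⟩ := List.getElem_of_mem hb
    rcases Nat.lt_or_ge i (B.length - 1) with h | h
    · exact (List.pairwise_iff_getElem.mp hBsorted) i (B.length - 1) hi (by omega) h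
    · have : i = B.length - 1 := by omega
      subst this; rfl
  have hlenpos : (0 : ℝ) < B.length := by exact_mod_cast h0
  constructor
  · refine ⟨x, hxn, ?_⟩
    rw [le_div_iff₀ hlenpos]
    have := List.card_nsmul_le_sum B x (fun b hb => le_trans hx (hfirst b hb))
    calc x * B.length = B.length • x := by
          simp [nsmul_eq_mul, mul_comm]
      _ ≤ B.sum := this
  · refine ⟨y, hyn, ?_⟩
    rw [div_le_iff₀ hlenpos]
    have := List.sum_le_card_nsmul B y (fun b hb => le_trans (hlast b hb) hy)
    calc B.sum ≤ B.length • y := this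
      _ = y * B.length := by simp [nsmul_eq_mul, mul_comm]
end

section
/- Let f ≥ 0 be an integer and let A be a finite index set with |A| > 2f, partitioned into honest indices H_A and at most f Byzantine indices. For each j ∈ A let x_j ∈ ℝ, and let B ⊆ A be obtained by deleting the indices of the f largest and f smallest values x_j (ties broken arbitrarily). Then for every Byzantine index j ∈ B there exist distinct honest indices j⁻, j⁺ ∈ A \ B with x_{j⁻} ≤ x_j ≤ x_{j⁺}, and hence x_j is a convex combination of x_{j⁻} and x_{j⁺}. Consequently, the average z = (x_i + ∑_{j∈B} x_j)/(|B|+1) (for a fixed honest index i ∉ A) can be written as a convex combination z = w_i x_i + ∑_{j∈H_A} w_j x_j with w_i ≥ 1/(|B|+1) and at least |B| of the honest weights w_j bounded below by 1/(2(|B|+1)). -/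
lemma convex_between {a b c : ℝ} (h1 : a ≤ c) (h2 : c ≤ b) :
    ∃ β : ℝ, 0 ≤ β ∧ β ≤ 1 ∧ c = β * a + (1 - β) * b := by
  rcases eq_or_lt_of_le (h1.trans h2) with h | h
  · exact ⟨1, zero_le_one, le_refl 1, by nlinarith⟩
  · have hba : b - a ≠ 0 := by linarith
    refine ⟨(b - c) / (b - a), div_nonneg (by linarith) (by linarith), ?_, ?_⟩
    · rw [div_le_one (by linarith)]; linarith
    · field_simp
      ring

set_option maxHeartbeats 2000000 in
theorem trimmed_mean_reparameterization {ι : Type*} [DecidableEq ι]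
    (f : ℕ) (A HA B Top Bot : Finset ι) (x : ι → ℝ) (i : ι)
    (hHA : HA ⊆ A) (hbyzcard : (A \ HA).card ≤ f)
    (hAcard : 2 * f < A.card)
    (hBsub : B ⊆ A)
    (hTop : Top ⊆ A \ B) (hBot : Bot ⊆ A \ B)
    (hdisj : Disjoint Top Bot)
    (hTopcard : Top.card = f) (hBotcard : Bot.card = f)
    (hunion : A = B ∪ Top ∪ Bot)
    (hTople : ∀ j ∈ B, ∀ u ∈ Top, x j ≤ x u)
    (hBotle : ∀ j ∈ B, ∀ l ∈ Bot, x l ≤ x j)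
    (hi : i ∉ A) :
    (∀ j ∈ B \ HA, ∃ jm ∈ (A \ B) ∩ HA, ∃ jp ∈ (A \ B) ∩ HA,
        jm ≠ jp ∧ x jm ≤ x j ∧ x j ≤ x jp ∧
        ∃ β : ℝ, 0 ≤ β ∧ β ≤ 1 ∧ x j = β * x jm + (1 - β) * x jp) ∧
    ∃ w : ι → ℝ, (∀ j, 0 ≤ w j) ∧
      w i + ∑ j ∈ HA, w j = 1 ∧
      (x i + ∑ j ∈ B, x j) / ((B.card : ℝ) + 1)
        = w i * x i + ∑ j ∈ HA, w j * x j ∧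
      1 / ((B.card : ℝ) + 1) ≤ w i ∧
      ∃ S ⊆ HA, B.card ≤ S.card ∧ ∀ j ∈ S, 1 / (2 * ((B.card : ℝ) + 1)) ≤ w j := by
  classical
  obtain ⟨m, hm⟩ : ∃ m : ℕ, m = (B \ HA).card := ⟨_, rfl⟩
  -- disjointness of Top, Bot with B
  have hTopB : Disjoint Top B :=
    Finset.disjoint_left.mpr fun a ha => (Finset.mem_sdiff.mp (hTop ha)).2
  have hBotB : Disjoint Bot B :=
    Finset.disjoint_left.mpr fun a ha => (Finset.mem_sdiff.mp (hBot ha)).2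
  -- card bounds
  have hTopH : m ≤ (Top ∩ HA).card := by
    have hd : Disjoint (Top \ HA) (B \ HA) :=
      (hTopB.mono (Finset.sdiff_subset) (Finset.sdiff_subset))
    have hsub : (Top \ HA) ∪ (B \ HA) ⊆ A \ HA := by
      apply Finset.union_subset
      · exact Finset.sdiff_subset_sdiff (fun a ha => (Finset.mem_sdiff.mp (hTop ha)).1) (le_refl _)
      · exact Finset.sdiff_subset_sdiff hBsub (le_refl _)
    have h1 : (Top \ HA).card + m ≤ f := by
      rw [hm, ← Finset.card_union_of_disjoint hd]
      exact le_trans (Finset.card_le_card hsub) hbyzcard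
    have h2 : (Top ∩ HA).card + (Top \ HA).card = Top.card :=
      Finset.card_inter_add_card_sdiff Top HA
    omega
  have hBotH : m ≤ (Bot ∩ HA).card := by
    have hd : Disjoint (Bot \ HA) (B \ HA) :=
      (hBotB.mono (Finset.sdiff_subset) (Finset.sdiff_subset))
    have hsub : (Bot \ HA) ∪ (B \ HA) ⊆ A \ HA := by
      apply Finset.union_subset
      · exact Finset.sdiff_subset_sdiff (fun a ha => (Finset.mem_sdiff.mp (hBot ha)).1) (le_refl _)
      · exact Finset.sdiff_subset_sdiff hBsub (le_refl _)
    have h1 : (Bot \ HA).card + m ≤ f := by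
      rw [hm, ← Finset.card_union_of_disjoint hd]
      exact le_trans (Finset.card_le_card hsub) hbyzcard
    have h2 : (Bot ∩ HA).card + (Bot \ HA).card = Bot.card :=
      Finset.card_inter_add_card_sdiff Bot HA
    omega
  -- Part 1
  have part1 : ∀ j ∈ B \ HA, ∃ jm ∈ (A \ B) ∩ HA, ∃ jp ∈ (A \ B) ∩ HA,
      jm ≠ jp ∧ x jm ≤ x j ∧ x j ≤ x jp ∧
      ∃ β : ℝ, 0 ≤ β ∧ β ≤ 1 ∧ x j = β * x jm + (1 - β) * x jp := by
    intro j hj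
    have hjB : j ∈ B := (Finset.mem_sdiff.mp hj).1
    have hm1 : 1 ≤ m := by
      rw [hm]; exact Finset.card_pos.mpr ⟨j, hj⟩
    obtain ⟨jp, hjp⟩ : (Top ∩ HA).Nonempty :=
      Finset.card_pos.mp (lt_of_lt_of_le hm1 hTopH)
    obtain ⟨jm, hjm⟩ : (Bot ∩ HA).Nonempty :=
      Finset.card_pos.mp (lt_of_lt_of_le hm1 hBotH)
    have hjpT : jp ∈ Top := (Finset.mem_inter.mp hjp).1
    have hjmB : jm ∈ Bot := (Finset.mem_inter.mp hjm).1
    have hle1 : x jm ≤ x j := hBotle j hjB jm hjmB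
    have hle2 : x j ≤ x jp := hTople j hjB jp hjpT
    obtain ⟨β, hβ0, hβ1, hβeq⟩ := convex_between hle1 hle2
    refine ⟨jm, ?_, jp, ?_, ?_, hle1, hle2, β, hβ0, hβ1, hβeq⟩
    · exact Finset.mem_inter.mpr ⟨hBot hjmB, (Finset.mem_inter.mp hjm).2⟩
    · exact Finset.mem_inter.mpr ⟨hTop hjpT, (Finset.mem_inter.mp hjp).2⟩
    · intro h; exact (Finset.disjoint_left.mp hdisj hjpT) (h ▸ hjmB)
  refine ⟨part1, ?_⟩
  -- choose subsets of honest top/bottom of size m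
  obtain ⟨T', hT'sub, hT'card⟩ := Finset.exists_subset_card_eq hTopH
  obtain ⟨Bo', hBo'sub, hBo'card⟩ := Finset.exists_subset_card_eq hBotH
  have hT'Top : T' ⊆ Top := hT'sub.trans Finset.inter_subset_left
  have hBo'Bot : Bo' ⊆ Bot := hBo'sub.trans Finset.inter_subset_left
  have hT'HA : T' ⊆ HA := hT'sub.trans Finset.inter_subset_right
  have hBo'HA : Bo' ⊆ HA := hBo'sub.trans Finset.inter_subset_right
  -- choose convex coefficients
  have hbeta : ∀ k : ι, ∃ β : ℝ, 0 ≤ β ∧ β ≤ 1 ∧ (k ∈ B \ HA →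
      x k = β * ((∑ l ∈ Bo', x l) / m) + (1 - β) * ((∑ u ∈ T', x u) / m)) := by
    intro k
    by_cases hk : k ∈ B \ HA
    · have hkB : k ∈ B := (Finset.mem_sdiff.mp hk).1
      have hm1 : 0 < m := by rw [hm]; exact Finset.card_pos.mpr ⟨k, hk⟩
      have hmR : (0:ℝ) < m := by exact_mod_cast hm1
      have h1 : (∑ l ∈ Bo', x l) / m ≤ x k := by
        rw [div_le_iff₀ hmR]
        calc ∑ l ∈ Bo', x l ≤ ∑ _l ∈ Bo', x k :=
              Finset.sum_le_sum fun l hl => hBotle k hkB l (hBo'Bot hl)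
          _ = x k * m := by rw [Finset.sum_const, hBo'card, nsmul_eq_mul, mul_comm]
      have h2 : x k ≤ (∑ u ∈ T', x u) / m := by
        rw [le_div_iff₀ hmR]
        calc x k * m = ∑ _u ∈ T', x k := by
              rw [Finset.sum_const, hT'card, nsmul_eq_mul, mul_comm]
          _ ≤ ∑ u ∈ T', x u :=
              Finset.sum_le_sum fun u hu => hTople k hkB u (hT'Top hu)
      obtain ⟨β, hb0, hb1, hbeq⟩ := convex_between h1 h2
      exact ⟨β, hb0, hb1, fun _ => hbeq⟩
    · exact ⟨0, le_refl 0, zero_le_one, fun h => absurd h hk⟩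
  choose β hβ0 hβ1 hβeq using hbeta
  obtain ⟨N, hN⟩ : ∃ N : ℝ, N = (B.card : ℝ) + 1 := ⟨_, rfl⟩
  rw [← hN]
  have hNpos : (0:ℝ) < N := by rw [hN]; positivity
  obtain ⟨sβ, hsβ⟩ : ∃ s : ℝ, s = ∑ k ∈ B \ HA, β k := ⟨_, rfl⟩
  have hsβ0 : 0 ≤ sβ := hsβ ▸ Finset.sum_nonneg fun k _ => hβ0 k
  have hsβm : sβ ≤ m := by
    rw [hsβ]
    calc (∑ k ∈ B \ HA, β k) ≤ ∑ _k ∈ B \ HA, (1:ℝ) := Finset.sum_le_sum fun k _ => hβ1 k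
      _ = m := by rw [Finset.sum_const, nsmul_eq_mul, mul_one, hm]
  -- define the weights
  obtain ⟨w, hw⟩ : ∃ w : ι → ℝ, w = fun j =>
      (if j = i then 1/N else 0) + (if j ∈ B ∩ HA then 1/N else 0)
      + (if j ∈ T' then ((m:ℝ) - sβ)/(m*N) else 0)
      + (if j ∈ Bo' then sβ/(m*N) else 0) := ⟨_, rfl⟩
  have hhalfN : 1/(2*N) ≤ 1/N := by
    rw [div_le_div_iff₀ (by positivity) hNpos]; linarith
  have hwval1 : (0:ℝ) ≤ 1/N := by positivity
  have hwval2 : (0:ℝ) ≤ ((m:ℝ) - sβ)/(m*N) := by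
    apply div_nonneg (by linarith) (by positivity)
  have hwval3 : (0:ℝ) ≤ sβ/(m*N) := by
    apply div_nonneg hsβ0 (by positivity)
  -- membership facts
  have hiBH : i ∉ B ∩ HA := fun h => hi (hBsub (Finset.mem_inter.mp h).1)
  have hiT' : i ∉ T' := fun h => hi ((Finset.mem_sdiff.mp (hTop (hT'Top h))).1)
  have hiBo' : i ∉ Bo' := fun h => hi ((Finset.mem_sdiff.mp (hBot (hBo'Bot h))).1)
  have hBHT' : ∀ j ∈ B ∩ HA, j ∉ T' := fun j hj h =>
    (Finset.disjoint_left.mp hTopB (hT'Top h)) (Finset.mem_inter.mp hj).1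
  have hBHBo' : ∀ j ∈ B ∩ HA, j ∉ Bo' := fun j hj h =>
    (Finset.disjoint_left.mp hBotB (hBo'Bot h)) (Finset.mem_inter.mp hj).1
  have hT'Bo' : ∀ j ∈ T', j ∉ Bo' := fun j hj h =>
    (Finset.disjoint_left.mp hdisj (hT'Top hj)) (hBo'Bot h)
  have hne_i : ∀ j ∈ HA, j ≠ i := fun j hj h => hi (h ▸ hHA hj)
  -- value of w at i
  have hwi : w i = 1/N := by
    simp only [hw]
    rw [if_neg hiBH, if_neg hiT', if_neg hiBo']
    simp
  -- values of w on pieces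
  have hwBH : ∀ j ∈ B ∩ HA, w j = 1/N := by
    intro j hj
    simp only [hw]
    rw [if_neg (hne_i j (Finset.mem_inter.mp hj).2), if_pos hj,
      if_neg (hBHT' j hj), if_neg (hBHBo' j hj)]
    ring
  have hwT' : ∀ j ∈ T', w j = ((m:ℝ) - sβ)/(m*N) := by
    intro j hj
    have hjB : j ∉ B ∩ HA := fun h =>
      (Finset.disjoint_left.mp hTopB (hT'Top hj)) (Finset.mem_inter.mp h).1
    simp only [hw]
    rw [if_neg (hne_i j (hT'HA hj)), if_neg hjB, if_pos hj, if_neg (hT'Bo' j hj)]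
    ring
  have hwBo' : ∀ j ∈ Bo', w j = sβ/(m*N) := by
    intro j hj
    have hjB : j ∉ B ∩ HA := fun h =>
      (Finset.disjoint_left.mp hBotB (hBo'Bot hj)) (Finset.mem_inter.mp h).1
    have hjT : j ∉ T' := fun h => hT'Bo' j h hj
    simp only [hw]
    rw [if_neg (hne_i j (hBo'HA hj)), if_neg hjB, if_neg hjT, if_pos hj]
    ring
  -- generic sum splitter over HA
  have hsum_split : ∀ g : ι → ℝ,
      ∑ j ∈ HA, w j * g j = (∑ j ∈ B ∩ HA, g j) * (1/N)
        + (∑ j ∈ T', g j) * (((m:ℝ) - sβ)/(m*N))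
        + (∑ j ∈ Bo', g j) * (sβ/(m*N)) := by
    intro g
    have hsplit : ∀ j, w j * g j =
        (if j = i then (1/N) * g j else 0) + (if j ∈ B ∩ HA then (1/N) * g j else 0)
        + (if j ∈ T' then (((m:ℝ) - sβ)/(m*N)) * g j else 0)
        + (if j ∈ Bo' then (sβ/(m*N)) * g j else 0) := by
      intro j
      simp only [hw]
      split_ifs <;> ring
    rw [Finset.sum_congr rfl fun j _ => hsplit j]
    rw [Finset.sum_add_distrib, Finset.sum_add_distrib, Finset.sum_add_distrib]
    rw [Finset.sum_ite_eq' HA i, if_neg (fun h => hi (hHA h))]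
    rw [Finset.sum_ite_mem, Finset.sum_ite_mem, Finset.sum_ite_mem]
    rw [Finset.inter_eq_right.mpr (Finset.inter_subset_right : B ∩ HA ⊆ HA),
      Finset.inter_eq_right.mpr hT'HA, Finset.inter_eq_right.mpr hBo'HA]
    rw [← Finset.mul_sum, ← Finset.mul_sum, ← Finset.mul_sum]
    ring
  -- card fact
  have hcardBH : ((B ∩ HA).card : ℝ) + m = B.card := by
    rw [hm]
    exact_mod_cast congrArg (Nat.cast : ℕ → ℝ) (Finset.card_inter_add_card_sdiff B HA)
  -- main sum over byzantine part
  have hbyz_sum : ∑ k ∈ B \ HA, x k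
      = sβ * ((∑ l ∈ Bo', x l) / m) + ((m:ℝ) - sβ) * ((∑ u ∈ T', x u) / m) := by
    rw [Finset.sum_congr rfl fun k hk => hβeq k hk]
    rw [Finset.sum_add_distrib]
    rw [← Finset.sum_mul, ← hsβ]
    congr 1
    rw [← Finset.sum_mul]
    congr 1
    rw [Finset.sum_sub_distrib, Finset.sum_const, nsmul_eq_mul, mul_one, ← hsβ, ← hm]
  rcases Nat.eq_zero_or_pos m with hm0 | hmpos
  · -- m = 0 : no byzantine nodes in B
    have hT'e : T' = ∅ := Finset.card_eq_zero.mp (by rw [hT'card, hm0])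
    have hBo'e : Bo' = ∅ := Finset.card_eq_zero.mp (by rw [hBo'card, hm0])
    have hBHA : B ∩ HA = B := by
      have h0 : B \ HA = ∅ := Finset.card_eq_zero.mp (by rw [← hm, hm0])
      rw [Finset.sdiff_eq_empty_iff_subset] at h0
      exact Finset.inter_eq_left.mpr h0
    refine ⟨w, ?_, ?_, ?_, ?_, B, Finset.inter_eq_left.mp hBHA, le_refl _, ?_⟩
    · intro j; simp only [hw]; split_ifs <;> linarith [hwval1, hwval2, hwval3]
    · rw [hwi]
      have hs := hsum_split (fun _ => 1)
      simp only [mul_one] at hs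
      rw [hs, hT'e, hBo'e, hBHA]
      simp only [Finset.sum_empty, Finset.sum_const, nsmul_eq_mul, mul_one, zero_mul, add_zero]
      rw [hN]
      have hB0 : ((B.card : ℝ) + 1) ≠ 0 := by positivity
      field_simp
      simp; ring
    · rw [hwi, hsum_split x, hT'e, hBo'e, hBHA]
      simp only [Finset.sum_empty, zero_mul, add_zero]
      ring
    · rw [hwi]
    · intro j hj
      rw [hwBH j (by rw [hBHA]; exact hj)]
      rw [div_le_div_iff₀ (mul_pos two_pos hNpos) hNpos]
      linarith
  · -- m > 0
    have hmR : (0:ℝ) < m := by exact_mod_cast hmpos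
    have hmNe : (m:ℝ) ≠ 0 := ne_of_gt hmR
    refine ⟨w, ?_, ?_, ?_, ?_, ?_⟩
    · intro j; simp only [hw]; split_ifs <;> linarith [hwval1, hwval2, hwval3]
    · rw [hwi]
      have hs := hsum_split (fun _ => 1)
      simp only [mul_one] at hs
      rw [hs]
      simp only [Finset.sum_const, nsmul_eq_mul, mul_one, hT'card, hBo'card]
      have e2 : (↑m:ℝ) * ((↑m - sβ)/(↑m*N)) = (↑m - sβ)/N := by field_simp
      have e3 : (↑m:ℝ) * (sβ/(↑m*N)) = sβ/N := by field_simp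
      rw [e2, e3, hN]
      have hB0 : ((B.card : ℝ) + 1) ≠ 0 := by have := hNpos; rw [hN] at this; exact ne_of_gt this
      field_simp
      linarith [hcardBH]
    · rw [hwi, hsum_split x, ← Finset.sum_inter_add_sum_sdiff B HA x, hbyz_sum]
      ring
    · rw [hwi]
    · -- the heavy set S
      have hdT : Disjoint (B ∩ HA) T' := Finset.disjoint_left.mpr fun a ha hT =>
        Finset.disjoint_left.mp hTopB (hT'Top hT) (Finset.mem_inter.mp ha).1
      have hdB : Disjoint (B ∩ HA) Bo' := Finset.disjoint_left.mpr fun a ha hT =>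
        Finset.disjoint_left.mp hBotB (hBo'Bot hT) (Finset.mem_inter.mp ha).1
      have hcards := Finset.card_inter_add_card_sdiff B HA
      by_cases hcase : 2 * sβ ≤ (m:ℝ)
      · refine ⟨(B ∩ HA) ∪ T',
          Finset.union_subset Finset.inter_subset_right hT'HA, ?_, ?_⟩
        · rw [Finset.card_union_of_disjoint hdT, hT'card]; omega
        · intro j hj
          rcases Finset.mem_union.mp hj with hj | hj
          · rw [hwBH j hj, div_le_div_iff₀ (mul_pos two_pos hNpos) hNpos]; linarith
          · rw [hwT' j hj, div_le_div_iff₀ (mul_pos two_pos hNpos) (mul_pos hmR hNpos)]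
            nlinarith [mul_nonneg hNpos.le (sub_nonneg.mpr hcase)]
      · push_neg at hcase
        refine ⟨(B ∩ HA) ∪ Bo',
          Finset.union_subset Finset.inter_subset_right hBo'HA, ?_, ?_⟩
        · rw [Finset.card_union_of_disjoint hdB, hBo'card]; omega
        · intro j hj
          rcases Finset.mem_union.mp hj with hj | hj
          · rw [hwBH j hj, div_le_div_iff₀ (mul_pos two_pos hNpos) hNpos]; linarith
          · rw [hwBo' j hj, div_le_div_iff₀ (mul_pos two_pos hNpos) (mul_pos hmR hNpos)]
            nlinarith [mul_nonneg hNpos.le (le_of_lt (sub_pos.mpr hcase))]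
end
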